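/- Let (X,Ω) be a measurable space and E a Dedekind complete vector lattice. If (μ_λ) is an increasing net of E̅⁺-valued measures on Ω, then the set map μ defined by μ(Δ) := sup_λ μ_λ(Δ) (supremum in E̅⁺) is an E̅⁺-valued measure, and μ_λ ↑ μ in the cone of E̅⁺-valued measures. -/

import Mathlib

variable {X : Type*} [MeasurableSpace X]
variable {E : Type*} [Lattice E] [AddCommGroup E]
  [CovariantClass E E (· + ·) (· ≤ ·)]

/-- An `E̅⁺`-valued measure, `E̅ = WithTop E`. -/
def IsEMeasure (μ : Set X → WithTop E) : Prop :=
  μ ∅ = 0 ∧ (∀ Δ, MeasurableSet Δ → 0 ≤ μ Δ) ∧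
    ∀ Δ : ℕ → Set X, (∀ n, MeasurableSet (Δ n)) →
      Pairwise (Function.onFun Disjoint Δ) →
      IsLUB (Set.range fun N => ∑ n ∈ Finset.range N, μ (Δ n))
        (μ (⋃ n, Δ n))

set_option linter.unusedSectionVars false in
/-- Bounded families in `E` (viewed in `WithTop E`) have a coe LUB. -/
theorem aux_coe_isLUB (hDed : ∀ T : Set E, T.Nonempty → BddAbove T → ∃ a, IsLUB T a)
    {ι : Type*} [Nonempty ι] {f : ι → E} {c : E} (hb : ∀ i, f i ≤ c) :
    ∃ a : E, IsLUB (Set.range f) a ∧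
      IsLUB (Set.range fun i => (f i : WithTop E)) (a : WithTop E) := by
  obtain ⟨a, ha⟩ := hDed (Set.range f) (Set.range_nonempty f) ⟨c, by rintro _ ⟨i, rfl⟩; exact hb i⟩
  refine ⟨a, ha, ?_, ?_⟩
  · rintro _ ⟨i, rfl⟩
    exact WithTop.coe_le_coe.2 (ha.1 ⟨i, rfl⟩)
  · intro b hbb
    rcases eq_or_ne b ⊤ with rfl | hbne
    · exact le_top
    lift b to E using hbne
    exact WithTop.coe_le_coe.2 (ha.2 (by rintro _ ⟨i, rfl⟩; exact WithTop.coe_le_coe.1 (hbb ⟨i, rfl⟩)))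

/-- LUBs of monotone nets in `WithTop E` add. -/
theorem aux_isLUB_add (hDed : ∀ T : Set E, T.Nonempty → BddAbove T → ∃ a, IsLUB T a)
    {ι : Type*} [SemilatticeSup ι] [Nonempty ι]
    {f g : ι → WithTop E} {a b : WithTop E}
    (hf : ∀ i j, i ≤ j → f i ≤ f j) (hg : ∀ i j, i ≤ j → g i ≤ g j)
    (ha : IsLUB (Set.range f) a) (hb : IsLUB (Set.range g) b) :
    IsLUB (Set.range fun i => f i + g i) (a + b) := by
  constructor
  · rintro _ ⟨i, rfl⟩
    exact add_le_add (ha.1 ⟨i, rfl⟩) (hb.1 ⟨i, rfl⟩)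
  · intro c hc
    rcases eq_or_ne c ⊤ with rfl | hcne
    · exact le_top
    lift c to E using hcne
    have hmix : ∀ i j, f i + g j ≤ (c : WithTop E) := by
      intro i j
      calc f i + g j ≤ f (i ⊔ j) + g (i ⊔ j) :=
            add_le_add (hf _ _ le_sup_left) (hg _ _ le_sup_right)
        _ ≤ c := hc ⟨i ⊔ j, rfl⟩
    have hfne : ∀ i, f i ≠ ⊤ := by
      intro i h
      have := hmix i i
      rw [h, WithTop.top_add] at this
      exact WithTop.not_top_le_coe c this
    have hgne : ∀ i, g i ≠ ⊤ := by
      intro i h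
      have := hmix i i
      rw [h, WithTop.add_top] at this
      exact WithTop.not_top_le_coe c this
    set f' : ι → E := fun i => (f i).untop (hfne i) with hf'def
    set g' : ι → E := fun i => (g i).untop (hgne i) with hg'def
    have hf'e : ∀ i, f i = ↑(f' i) := fun i => (WithTop.coe_untop _ _).symm
    have hg'e : ∀ i, g i = ↑(g' i) := fun i => (WithTop.coe_untop _ _).symm
    have hmix' : ∀ i j, f' i + g' j ≤ c := by
      intro i j
      have := hmix i j
      rw [hf'e i, hg'e j, ← WithTop.coe_add] at this
      exact WithTop.coe_le_coe.1 this
    obtain ⟨i₀⟩ := ‹Nonempty ι›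
    obtain ⟨a', ha'E, ha'⟩ := aux_coe_isLUB hDed (f := f') (c := c - g' i₀)
      (fun i => le_sub_iff_add_le.2 (hmix' i i₀))
    have hmix'' : ∀ j i, g' j + f' i ≤ c := fun j i => by
      rw [add_comm]; exact hmix' i j
    obtain ⟨b', hb'E, hb'⟩ := aux_coe_isLUB hDed (f := g') (c := c - f' i₀)
      (fun j => le_sub_iff_add_le.2 (hmix'' j i₀))
    have haeq : a = (a' : WithTop E) := by
      refine ha.unique ?_
      have : (Set.range f) = Set.range fun i => ((f' i : WithTop E)) := by
        ext x; constructor <;> rintro ⟨i, rfl⟩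
        · exact ⟨i, (hf'e i).symm⟩
        · exact ⟨i, hf'e i⟩
      rw [this]; exact ha'
    have hbeq : b = (b' : WithTop E) := by
      refine hb.unique ?_
      have : (Set.range g) = Set.range fun i => ((g' i : WithTop E)) := by
        ext x; constructor <;> rintro ⟨i, rfl⟩
        · exact ⟨i, (hg'e i).symm⟩
        · exact ⟨i, hg'e i⟩
      rw [this]; exact hb'
    have hab : a' + b' ≤ c := by
      have h1 : a' ≤ c - b' := by
        refine ha'E.2 ?_
        rintro _ ⟨i, rfl⟩
        refine le_sub_iff_add_le.2 ?_
        have h2 : b' ≤ c - f' i := by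
          refine hb'E.2 ?_
          rintro _ ⟨j, rfl⟩
          exact le_sub_iff_add_le.2 (hmix'' j i)
        have h3 : f' i + b' ≤ f' i + (c - f' i) := add_le_add_right h2 _
        have h4 : f' i + (c - f' i) = c := by abel
        exact le_trans h3 (le_of_eq h4)
      have h5 : a' + b' ≤ (c - b') + b' := add_le_add_left h1 _
      have h6 : (c - b') + b' = c := by abel
      exact le_trans h5 (le_of_eq h6)
    rw [haeq, hbeq, ← WithTop.coe_add]
    exact WithTop.coe_le_coe.2 hab

theorem aux_sum_mono {ι' : Type*} (s : Finset ι') (f g : ι' → WithTop E)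
    (h : ∀ n ∈ s, f n ≤ g n) : ∑ n ∈ s, f n ≤ ∑ n ∈ s, g n := by
  classical
  induction s using Finset.induction with
  | empty => simp
  | @insert x s hx ih =>
      rw [Finset.sum_insert hx, Finset.sum_insert hx]
      exact add_le_add (h _ (Finset.mem_insert_self _ _))
        (ih fun n hn => h n (Finset.mem_insert_of_mem hn))

/-- if `(μ_λ)` is an increasing net of `E̅⁺`-valued measures and
`μ(Δ) := sup_λ μ_λ(Δ)`, then `μ` is an `E̅⁺`-valued measure and `μ_λ ↑ μ` in
the pointwise order on the cone of `E̅⁺`-valued measures. -/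
theorem stmt_13 (hDed : ∀ T : Set E, T.Nonempty → BddAbove T → ∃ a, IsLUB T a)
    {ι : Type*} [SemilatticeSup ι] [Nonempty ι]
    (μnet : ι → Set X → WithTop E)
    (hmeas : ∀ i, IsEMeasure (μnet i))
    (hmono : ∀ i j, i ≤ j → ∀ Δ, MeasurableSet Δ → μnet i Δ ≤ μnet j Δ)
    (μ : Set X → WithTop E)
    (hμ : ∀ Δ, MeasurableSet Δ →
      IsLUB (Set.range fun i => μnet i Δ) (μ Δ)) :
    IsEMeasure μ ∧
      (∀ i, ∀ Δ, MeasurableSet Δ → μnet i Δ ≤ μ Δ) ∧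
      ∀ σ : Set X → WithTop E, IsEMeasure σ →
        (∀ i, ∀ Δ, MeasurableSet Δ → μnet i Δ ≤ σ Δ) →
        ∀ Δ, MeasurableSet Δ → μ Δ ≤ σ Δ := by
  have hle : ∀ i, ∀ Δ, MeasurableSet Δ → μnet i Δ ≤ μ Δ := fun i Δ hΔ =>
    (hμ Δ hΔ).1 ⟨i, rfl⟩
  -- LUB of partial sums over the net equals partial sum of μ
  have hC : ∀ (Δ : ℕ → Set X), (∀ n, MeasurableSet (Δ n)) → ∀ N : ℕ,
      IsLUB (Set.range fun i => ∑ n ∈ Finset.range N, μnet i (Δ n))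
        (∑ n ∈ Finset.range N, μ (Δ n)) := by
    intro Δ hΔ N
    induction N with
    | zero =>
        simp only [Finset.range_zero, Finset.sum_empty]
        rw [show (Set.range fun _ : ι => (0 : WithTop E)) = {0} from Set.range_const]
        exact isLUB_singleton
    | succ N ih =>
        simp only [Finset.sum_range_succ]
        exact aux_isLUB_add hDed
          (fun i j h => aux_sum_mono _ _ _ fun n _ => hmono i j h _ (hΔ n))
          (fun i j h => hmono i j h _ (hΔ N)) ih (hμ _ (hΔ N))
  refine ⟨⟨?_, ?_, ?_⟩, hle, ?_⟩
  · -- μ ∅ = 0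
    have h := hμ ∅ MeasurableSet.empty
    have he : (Set.range fun i => μnet i ∅) = {0} := by
      rw [show (fun i => μnet i ∅) = fun _ : ι => (0 : WithTop E) from
        funext fun i => (hmeas i).1]
      exact Set.range_const
    rw [he] at h
    exact h.unique isLUB_singleton
  · -- nonnegativity
    intro Δ hΔ
    exact le_trans ((hmeas (Classical.arbitrary ι)).2.1 Δ hΔ)
      (hle (Classical.arbitrary ι) Δ hΔ)
  · -- σ-additivity
    intro Δ hΔ hdisj
    have hU : MeasurableSet (⋃ n, Δ n) := MeasurableSet.iUnion hΔ
    constructor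
    · rintro _ ⟨N, rfl⟩
      refine (hC Δ hΔ N).2 ?_
      rintro _ ⟨i, rfl⟩
      calc ∑ n ∈ Finset.range N, μnet i (Δ n) ≤ μnet i (⋃ n, Δ n) :=
            ((hmeas i).2.2 Δ hΔ hdisj).1 ⟨N, rfl⟩
        _ ≤ μ (⋃ n, Δ n) := hle i _ hU
    · intro b hb
      refine (hμ _ hU).2 ?_
      rintro _ ⟨i, rfl⟩
      refine ((hmeas i).2.2 Δ hΔ hdisj).2 ?_
      rintro _ ⟨N, rfl⟩
      calc ∑ n ∈ Finset.range N, μnet i (Δ n) ≤ ∑ n ∈ Finset.range N, μ (Δ n) :=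
            aux_sum_mono _ _ _ fun n _ => hle i _ (hΔ n)
        _ ≤ b := hb ⟨N, rfl⟩
  · -- minimality
    intro σ hσ hub Δ hΔ
    exact (hμ Δ hΔ).2 (by rintro _ ⟨i, rfl⟩; exact hub i Δ hΔ)
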